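/- Let T > 0, C > 0, and let (N_k)_{k ≥ 0} be continuous nonnegative functions on [0, T] with M := sup_{t ∈ [0,T]} N₀(t) < ∞ and N_k(t) ≤ 2C ∫₀^t (t − s)^{−1/2} N_{k−1}(s) ds for every k ≥ 1 and t ∈ [0, T]. Then for every k ≥ 0 and t ∈ [0, T]: N_k(t) ≤ M (2C Γ(1/2))^k t^{k/2} / Γ((k+2)/2). In particular, Σ_{k=0}^∞ N_k(t) converges uniformly on [0, T]. -/
import Mathlib


open MeasureTheory Real Set intervalIntegral
open scoped Interval

noncomputable section


lemma realBeta {a b : ℝ} (ha : 0 < a) (hb : 0 < b) :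
    ∫ x in (0:ℝ)..1, x ^ (a-1) * (1-x) ^ (b-1)
      = Real.Gamma a * Real.Gamma b / Real.Gamma (a+b) := by
  have key : Complex.betaIntegral a b
      = ((∫ x in (0:ℝ)..1, x ^ (a-1) * (1-x) ^ (b-1) : ℝ) : ℂ) := by
    rw [Complex.betaIntegral, ← intervalIntegral.integral_ofReal]
    refine intervalIntegral.integral_congr fun x hx => ?_
    rw [uIcc_of_le zero_le_one] at hx
    rw [Complex.ofReal_mul, Complex.ofReal_cpow hx.1,
      Complex.ofReal_cpow (by linarith [hx.2] : (0:ℝ) ≤ 1 - x)]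
    push_cast
    ring
  have h := Complex.Gamma_mul_Gamma_eq_betaIntegral (s := (a:ℂ)) (t := (b:ℂ))
    (by simpa using ha) (by simpa using hb)
  rw [key] at h
  have hab : (0:ℝ) < Real.Gamma (a+b) := Real.Gamma_pos_of_pos (by linarith)
  have : Real.Gamma a * Real.Gamma b = Real.Gamma (a+b) * ∫ x in (0:ℝ)..1, x ^ (a-1) * (1-x) ^ (b-1) := by
    have := h
    rw [← Complex.ofReal_add, Complex.Gamma_ofReal, Complex.Gamma_ofReal, Complex.Gamma_ofReal] at this
    exact_mod_cast this
  rw [this]; field_simp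

lemma kernelIntegrable {t p q : ℝ} (ht : 0 < t) (hp : -1 < p) (hq : -1 < q) :
    IntervalIntegrable (fun s => (t-s) ^ p * s ^ q) volume 0 t := by
  have h2 : (0:ℝ) < t/2 := by linarith
  have part1 : IntervalIntegrable (fun s => (t-s) ^ p * s ^ q) volume 0 (t/2) := by
    have hint : IntervalIntegrable (fun s : ℝ => s ^ q) volume 0 (t/2) :=
      intervalIntegrable_rpow' hq
    have hcont : ContinuousOn (fun s : ℝ => (t-s) ^ p) [[0, t/2]] := by
      rw [uIcc_of_le h2.le]
      apply ContinuousOn.rpow_const (by fun_prop)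
      intro x hx
      exact Or.inl (by simp only [mem_Icc] at hx; intro h; nlinarith [hx.2])
    exact hint.continuousOn_mul hcont
  have part2 : IntervalIntegrable (fun s => (t-s) ^ p * s ^ q) volume (t/2) t := by
    have hint : IntervalIntegrable (fun s : ℝ => (t-s) ^ p) volume (t/2) t := by
      have h3 := (intervalIntegrable_rpow' hp (a := 0) (b := t/2)).comp_sub_left t
      rw [show t - 0 = t by ring, show t - t/2 = t/2 by ring] at h3
      exact h3.symm
    have hcont : ContinuousOn (fun s : ℝ => s ^ q) [[t/2, t]] := by
      rw [uIcc_of_le (by linarith)]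
      apply ContinuousOn.rpow_const (by fun_prop)
      intro x hx
      exact Or.inl (by simp only [mem_Icc] at hx; intro h; nlinarith [hx.1])
    exact hint.mul_continuousOn hcont
  exact part1.trans part2

lemma kernelIntegral {t p q : ℝ} (ht : 0 ≤ t) (hp : -1 < p) (hq : -1 < q)
    (hpq : 0 < p + q + 1) :
    ∫ s in (0:ℝ)..t, (t-s) ^ p * s ^ q
      = Real.Gamma (q+1) * Real.Gamma (p+1) / Real.Gamma (p+q+2) * t ^ (p+q+1) := by
  rcases eq_or_lt_of_le ht with rfl | ht'
  · rw [intervalIntegral.integral_same, Real.zero_rpow (by linarith), mul_zero]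
  · have hsub : ∫ x in (0:ℝ)..1, (fun s => (t-s) ^ p * s ^ q) (t * x)
        = t⁻¹ • ∫ s in (0:ℝ)..t, (t-s) ^ p * s ^ q := by
      simpa using intervalIntegral.integral_comp_mul_left (a := 0) (b := 1)
        (fun s => (t-s) ^ p * s ^ q) (ne_of_gt ht')
    have hval : ∫ x in (0:ℝ)..1, (fun s => (t-s) ^ p * s ^ q) (t * x)
        = t ^ (p+q) * (Real.Gamma (q+1) * Real.Gamma (p+1) / Real.Gamma (p+q+2)) := by
      have : ∀ x ∈ [[(0:ℝ), 1]], (fun s => (t-s) ^ p * s ^ q) (t * x)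
          = t ^ (p+q) * (x ^ ((q+1)-1) * (1-x) ^ ((p+1)-1)) := by
        intro x hx
        rw [uIcc_of_le zero_le_one] at hx
        simp only
        have h1 : t - t * x = t * (1 - x) := by ring
        rw [h1, Real.mul_rpow ht (by linarith [hx.2]), Real.mul_rpow ht hx.1,
          Real.rpow_add ht']
        ring
      rw [intervalIntegral.integral_congr this, intervalIntegral.integral_const_mul,
        realBeta (by linarith) (by linarith), show q+1+(p+1) = p+q+2 by ring]
    have ht'' : t ≠ 0 := ne_of_gt ht'
    have hmain : ∫ s in (0:ℝ)..t, (t-s) ^ p * s ^ q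
        = t * ∫ x in (0:ℝ)..1, (fun s => (t-s) ^ p * s ^ q) (t * x) := by
      rw [hsub, smul_eq_mul, ← mul_assoc, mul_inv_cancel₀ ht'', one_mul]
    rw [hmain, hval, Real.rpow_add ht' (p+q) 1, Real.rpow_one]
    ring

lemma summableAux (x : ℝ) (hx : 0 ≤ x) :
    Summable (fun k : ℕ => x ^ k / Real.Gamma ((k:ℝ)/2 + 1)) := by
  set z : ℝ := max (2*x) 1 with hz
  have hz1 : 1 ≤ z := le_max_right _ _
  have hz0 : 0 < z := lt_of_lt_of_le one_pos hz1
  -- eventually (z^2)^j / j! small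
  obtain ⟨J, hJ⟩ := (Filter.tendsto_atTop'.mp
    (FloorSemiring.tendsto_pow_div_factorial_atTop (z^2) (K := ℝ))) (Set.Iio (1/z))
    (Iio_mem_nhds (by positivity))
  have key : ∀ k : ℕ, 2*J + 2 ≤ k → x ^ k / Real.Gamma ((k:ℝ)/2 + 1) ≤ (1/2) ^ k := by
    intro k hk
    set j := k / 2 with hj
    have hjJ : J ≤ j := by omega
    have hj1 : 1 ≤ j := by omega
    have hfac : z * (z^2) ^ j ≤ (j.factorial:ℝ) := by
      have := hJ j hjJ
      rw [Set.mem_Iio, div_lt_iff₀ (by positivity)] at this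
      have hfacpos : (0:ℝ) < (j.factorial : ℝ) := by positivity
      calc z * (z^2)^j ≤ z * ((1/z) * (j.factorial:ℝ)) := by
            apply mul_le_mul_of_nonneg_left _ hz0.le
            · exact le_of_lt (by simpa [mul_comm] using this)
        _ = (j.factorial:ℝ) := by field_simp
    have hmono : (j.factorial : ℝ) ≤ Real.Gamma ((k:ℝ)/2 + 1) := by
      rw [← Real.Gamma_nat_eq_factorial]
      apply Real.Gamma_strictMonoOn_Ici.monotoneOn
      · simp only [Set.mem_Ici]
        have : (1:ℝ) ≤ (j:ℝ) := by exact_mod_cast hj1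
        linarith
      · simp only [Set.mem_Ici]
        have : (2:ℝ) ≤ (k:ℝ)/2 + 1 := by
          have : (2:ℝ) ≤ (k:ℝ) := by exact_mod_cast (by omega : 2 ≤ k)
          linarith
        exact this
      · have : ((j:ℝ)) ≤ (k:ℝ)/2 := by
          rw [le_div_iff₀ (by norm_num)]
          exact_mod_cast (by omega : j * 2 ≤ k)
        linarith
    have hzk : (2*x) ^ k ≤ z * (z^2) ^ j := by
      calc (2*x)^k ≤ z ^ k := pow_le_pow_left₀ (by linarith) (le_max_left _ _) k
        _ ≤ z ^ (2*j + 1) := pow_le_pow_right₀ hz1 (by omega)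
        _ = z * (z^2)^j := by rw [pow_add, pow_mul, pow_one]; ring
    have hGpos : 0 < Real.Gamma ((k:ℝ)/2 + 1) :=
      Real.Gamma_pos_of_pos (by positivity)
    rw [div_le_iff₀ hGpos]
    have h2x : x ^ k * 2 ^ k ≤ Real.Gamma ((k:ℝ)/2 + 1) := by
      calc x ^ k * 2 ^ k = (2*x)^k := by rw [mul_pow]; ring
        _ ≤ z * (z^2)^j := hzk
        _ ≤ (j.factorial:ℝ) := hfac
        _ ≤ _ := hmono
    calc x ^ k = x ^ k * 2 ^ k * (1/2)^k := by
          rw [mul_assoc, ← mul_pow]; norm_num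
      _ ≤ Real.Gamma ((k:ℝ)/2 + 1) * (1/2)^k := by
          apply mul_le_mul_of_nonneg_right h2x (by positivity)
      _ = (1/2)^k * Real.Gamma ((k:ℝ)/2 + 1) := by ring
  -- conclude summability
  set K := 2*J + 2 with hK
  rw [← summable_nat_add_iff K]
  have hgeo : Summable (fun k : ℕ => ((1:ℝ)/2) ^ (k + K)) := by
    simpa [pow_add] using
      (summable_geometric_of_lt_one (by norm_num : (0:ℝ) ≤ 1/2) (by norm_num)).mul_right
        (((1:ℝ)/2) ^ K)
  refine Summable.of_nonneg_of_le (fun k => ?_) (fun k => key (k + K) (by omega)) hgeo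
  have hGpos : 0 < Real.Gamma ((((k + K) : ℕ):ℝ)/2 + 1) := Real.Gamma_pos_of_pos (by positivity)
  exact div_nonneg (pow_nonneg hx _) hGpos.le


/-- iterated singular Gronwall bounds with Gamma function: if
`N_k(t) ≤ 2C ∫₀ᵗ (t−s)^{−1/2} N_{k−1}(s) ds` for `k ≥ 1` and `N₀ ≤ M` on `[0,T]`, then
`N_k(t) ≤ M (2C Γ(1/2))^k t^{k/2} / Γ((k+2)/2)`, and the series `Σ_k N_k` converges
uniformly on `[0,T]`. -/
theorem iterated_singular_gronwall (T C M : ℝ) (hT : 0 < T) (hC : 0 < C)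
    (N : ℕ → ℝ → ℝ)
    (hN_cont : ∀ k, ContinuousOn (N k) (Set.Icc 0 T))
    (hN_nonneg : ∀ k, ∀ t ∈ Set.Icc (0 : ℝ) T, 0 ≤ N k t)
    (hM : ∀ t ∈ Set.Icc (0 : ℝ) T, N 0 t ≤ M)
    (hrec : ∀ k : ℕ, 1 ≤ k → ∀ t ∈ Set.Icc (0 : ℝ) T,
      N k t ≤ 2 * C * ∫ s in (0:ℝ)..t, (t - s) ^ (-(1:ℝ)/2) * N (k - 1) s) :
    (∀ k : ℕ, ∀ t ∈ Set.Icc (0 : ℝ) T,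
      N k t ≤ M * (2 * C * Real.Gamma (1/2)) ^ k * t ^ ((k : ℝ)/2) /
        Real.Gamma (((k : ℝ) + 2)/2)) ∧
    TendstoUniformlyOn (fun n t => ∑ k ∈ Finset.range n, N k t)
      (fun t => ∑' k, N k t) Filter.atTop (Set.Icc 0 T) := by
  set B := 2 * C * Real.Gamma (1/2) with hB
  have hΓhalf : 0 < Real.Gamma (1/2) := Real.Gamma_pos_of_pos (by norm_num)
  have hBpos : 0 < B := by positivity
  have hM0 : 0 ≤ M := le_trans (hN_nonneg 0 0 ⟨le_refl _, hT.le⟩) (hM 0 ⟨le_refl _, hT.le⟩)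
  have hΓ : ∀ k : ℕ, 0 < Real.Gamma (((k:ℝ) + 2)/2) := fun k =>
    Real.Gamma_pos_of_pos (by positivity)
  have bound : ∀ k : ℕ, ∀ t ∈ Set.Icc (0:ℝ) T,
      N k t ≤ M * B ^ k * t ^ ((k:ℝ)/2) / Real.Gamma (((k:ℝ) + 2)/2) := by
    intro k
    induction k with
    | zero =>
      intro t ht
      have h1 : (((0:ℕ):ℝ) + 2)/2 = 1 := by norm_num
      have h2 : t ^ (((0:ℕ):ℝ)/2) = 1 := by norm_num
      rw [h1, h2, Real.Gamma_one]
      simpa using hM t ht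
    | succ k ih =>
      intro t ht
      obtain ⟨ht0, htT⟩ := ht
      have hcast : (((k+1:ℕ)):ℝ) = (k:ℝ) + 1 := by push_cast; ring
      rcases eq_or_lt_of_le ht0 with rfl | htpos
      · have h := hrec (k+1) (by omega) 0 ⟨le_refl _, hT.le⟩
        simp only [intervalIntegral.integral_same, mul_zero] at h
        have hz : (0:ℝ) ^ ((((k+1):ℕ):ℝ)/2) = 0 := by
          rw [Real.zero_rpow]
          rw [hcast]
          positivity
        rw [hz, mul_zero, zero_div]
        exact h
      · have h := hrec (k+1) (by omega) t ⟨ht0, htT⟩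
        simp only [Nat.add_sub_cancel] at h
        set c := M * B ^ k / Real.Gamma (((k:ℝ) + 2)/2) with hc
        have hc0 : 0 ≤ c := div_nonneg (by positivity) (hΓ k).le
        have hq : (-1:ℝ) < (k:ℝ)/2 := by
          have : (0:ℝ) ≤ (k:ℝ)/2 := by positivity
          linarith
        have hker : IntervalIntegrable (fun s : ℝ => (t - s) ^ (-(1:ℝ)/2)) volume 0 t := by
          have h3 := (intervalIntegrable_rpow' (by norm_num : (-1:ℝ) < -(1:ℝ)/2)
            (a := 0) (b := t)).comp_sub_left t
          rw [show t - 0 = t by ring, sub_self] at h3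
          exact h3.symm
        have hint1 : IntervalIntegrable (fun s => (t - s) ^ (-(1:ℝ)/2) * N k s) volume 0 t := by
          refine hker.mul_continuousOn ((hN_cont k).mono ?_)
          rw [uIcc_of_le ht0]
          exact Icc_subset_Icc le_rfl htT
        have hint2 : IntervalIntegrable
            (fun s => (t - s) ^ (-(1:ℝ)/2) * s ^ ((k:ℝ)/2) * c) volume 0 t :=
          (kernelIntegrable htpos (by norm_num) hq).mul_const c
        have hmono : (∫ s in (0:ℝ)..t, (t - s) ^ (-(1:ℝ)/2) * N k s)
            ≤ ∫ s in (0:ℝ)..t, (t - s) ^ (-(1:ℝ)/2) * s ^ ((k:ℝ)/2) * c := by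
          refine intervalIntegral.integral_mono_on ht0 hint1 hint2 fun s hs => ?_
          have hNk := ih s ⟨hs.1, hs.2.trans htT⟩
          have ha : (0:ℝ) ≤ (t - s) ^ (-(1:ℝ)/2) :=
            Real.rpow_nonneg (by linarith [hs.2]) _
          calc (t - s) ^ (-(1:ℝ)/2) * N k s
              ≤ (t - s) ^ (-(1:ℝ)/2) * (s ^ ((k:ℝ)/2) * c) := by
                refine mul_le_mul_of_nonneg_left ?_ ha
                rw [hc]
                calc N k s ≤ M * B ^ k * s ^ ((k:ℝ)/2) / Real.Gamma (((k:ℝ) + 2)/2) := hNk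
                  _ = s ^ ((k:ℝ)/2) * (M * B ^ k / Real.Gamma (((k:ℝ) + 2)/2)) := by ring
            _ = (t - s) ^ (-(1:ℝ)/2) * s ^ ((k:ℝ)/2) * c := by ring
        have hval : (∫ s in (0:ℝ)..t, (t - s) ^ (-(1:ℝ)/2) * s ^ ((k:ℝ)/2))
            = Real.Gamma ((k:ℝ)/2 + 1) * Real.Gamma (1/2)
              / Real.Gamma ((k:ℝ)/2 + 3/2) * t ^ ((k:ℝ)/2 + 1/2) := by
          have := kernelIntegral (t := t) (p := -(1:ℝ)/2) (q := (k:ℝ)/2) htpos.le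
            (by norm_num) hq (by
              have : (0:ℝ) ≤ (k:ℝ)/2 := by positivity
              linarith)
          rw [this, show -(1:ℝ)/2 + (k:ℝ)/2 + 2 = (k:ℝ)/2 + 3/2 by ring,
            show -(1:ℝ)/2 + (k:ℝ)/2 + 1 = (k:ℝ)/2 + 1/2 by ring,
            show -(1:ℝ)/2 + 1 = (1:ℝ)/2 by norm_num]
        have hintc : (∫ s in (0:ℝ)..t, (t - s) ^ (-(1:ℝ)/2) * s ^ ((k:ℝ)/2) * c)
            = (Real.Gamma ((k:ℝ)/2 + 1) * Real.Gamma (1/2)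
              / Real.Gamma ((k:ℝ)/2 + 3/2) * t ^ ((k:ℝ)/2 + 1/2)) * c := by
          rw [intervalIntegral.integral_mul_const, hval]
        have hfinal : N (k+1) t ≤ 2 * C * ((Real.Gamma ((k:ℝ)/2 + 1) * Real.Gamma (1/2)
            / Real.Gamma ((k:ℝ)/2 + 3/2) * t ^ ((k:ℝ)/2 + 1/2)) * c) := by
          rw [← hintc]
          exact h.trans (mul_le_mul_of_nonneg_left hmono (by positivity))
        refine hfinal.trans (le_of_eq ?_)
        rw [hc, hcast]
        have e1 : ((k:ℝ) + 1)/2 = (k:ℝ)/2 + 1/2 := by ring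
        have e2 : ((k:ℝ) + 1 + 2)/2 = (k:ℝ)/2 + 3/2 := by ring
        have e3 : ((k:ℝ) + 2)/2 = (k:ℝ)/2 + 1 := by ring
        rw [e1, e2, e3]
        have hG1 : Real.Gamma ((k:ℝ)/2 + 1) ≠ 0 :=
          (Real.Gamma_pos_of_pos (by positivity)).ne'
        have hG2 : Real.Gamma ((k:ℝ)/2 + 3/2) ≠ 0 :=
          (Real.Gamma_pos_of_pos (by positivity)).ne'
        rw [hB]
        field_simp
        ring
  refine ⟨bound, ?_⟩
  set u : ℕ → ℝ := fun k => M * B ^ k * T ^ ((k:ℝ)/2) / Real.Gamma (((k:ℝ) + 2)/2) with hu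
  have hueq : ∀ k : ℕ, u k = M * ((B * T ^ ((1:ℝ)/2)) ^ k / Real.Gamma ((k:ℝ)/2 + 1)) := by
    intro k
    have hTk : T ^ ((k:ℝ)/2) = (T ^ ((1:ℝ)/2)) ^ k := by
      rw [← Real.rpow_natCast (T ^ ((1:ℝ)/2)) k, ← Real.rpow_mul hT.le]
      congr 1
      ring
    rw [hu]
    simp only
    rw [hTk, show ((k:ℝ) + 2)/2 = (k:ℝ)/2 + 1 by ring, mul_pow]
    ring
  have hsum : Summable u := by
    refine ((summableAux (B * T ^ ((1:ℝ)/2)) (by positivity)).mul_left M).congr fun k => ?_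
    rw [hueq k]
  refine tendstoUniformlyOn_tsum_nat hsum fun k t ht => ?_
  rw [Real.norm_eq_abs, abs_of_nonneg (hN_nonneg k t ht)]
  refine (bound k t ht).trans ?_
  rw [hu]
  simp only
  gcongr <;> first
    | exact (hΓ k).le
    | exact Real.rpow_le_rpow ht.1 ht.2 (by positivity)
    | exact ht.1
    | exact ht.2

end
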